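/- Let m be odd with m + 1 ≡ 0 (mod 4), let n ≡ 2 (mod 4) with n ≠ 6 and 4 ≤ n ≤ ⌊m/2⌋ − 1, and let K(x) = x^{m+1} + x^{m−1} + x^{m−n+1} + x^{m−n−1} + x + 1 ∈ ℤ[x] with complex roots x_0, …, x_m and power sums S_k = ∑_{i=0}^m x_i^k. Then S_{2m−4} + S_{2m−2n} ≡ 2 (mod 4) if (2m mod n) ≤ 6, and S_{2m−4} + S_{2m−2n} ≡ 0 (mod 4) if (2m mod n) > 6. -/

import Mathlib

set_option maxHeartbeats 1600000

open Polynomial Finset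
open scoped PowerSeries

namespace TI


lemma hdiv (a b q r : ℕ) (hb : 0 < b) (h : a = b*q + r) (hr : r < b) : a / b = q := by
  subst h
  rw [Nat.mul_add_div hb, Nat.div_eq_of_lt hr, add_zero]

lemma nat_sub_div (a b : ℕ) (hb : 0 < b) (h : b ≤ a) : (a - b)/b = a/b - 1 := by
  have hd := Nat.div_add_mod a b
  have h1 : 1 ≤ a / b := (Nat.one_le_div_iff hb).2 h
  have h2 : b * (a/b - 1) = b * (a/b) - b := by rw [Nat.mul_sub, mul_one]
  have h3 : b ≤ b * (a/b) := Nat.le_mul_of_pos_right b h1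
  have : a - b = b * (a/b - 1) + a % b := by omega
  rw [hdiv _ b (a/b - 1) (a % b) hb this (Nat.mod_lt _ hb)]

noncomputable section

def w (n j : ℕ) : ZMod 4 := if Even j then (-1)^(j/2) * ((j/n + 1 : ℕ) : ZMod 4) else 0

def Wser (n : ℕ) : (ZMod 4)⟦X⟧ := PowerSeries.mk (w n)

def w' (n j : ℕ) : ZMod 2 := if 4 ∣ j then ((j/(2*n) + 1 : ℕ) : ZMod 2) else 0

def W'ser (n : ℕ) : (ZMod 2)⟦X⟧ := PowerSeries.mk (w' n)

lemma coeff_four {R : Type*} [CommRing R] (f : ℕ → R) (a b c : ℕ) (k : ℕ) :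
    (PowerSeries.coeff (R := R) k) (((1 : R⟦X⟧) + PowerSeries.X^a + PowerSeries.X^b
        + PowerSeries.X^c) * PowerSeries.mk f)
      = f k + (if a ≤ k then f (k-a) else 0) + (if b ≤ k then f (k-b) else 0)
        + (if c ≤ k then f (k-c) else 0) := by
  rw [add_mul, add_mul, add_mul, one_mul,
    show (PowerSeries.X:R⟦X⟧)^a * PowerSeries.mk f = PowerSeries.mk f * PowerSeries.X^a from
      mul_comm _ _,
    show (PowerSeries.X:R⟦X⟧)^b * PowerSeries.mk f = PowerSeries.mk f * PowerSeries.X^b from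
      mul_comm _ _,
    show (PowerSeries.X:R⟦X⟧)^c * PowerSeries.mk f = PowerSeries.mk f * PowerSeries.X^c from
      mul_comm _ _]
  simp [PowerSeries.coeff_mul_X_pow', PowerSeries.coeff_mk]

lemma lemVW (u n : ℕ) (hn : n = 4*u+2) (hu : 2 ≤ u) :
    ((1 : (ZMod 4)⟦X⟧) + PowerSeries.X^2 + PowerSeries.X^n + PowerSeries.X^(n+2)) * Wser n
      = 1 := by
  have hnpos : 0 < n := by omega
  ext k
  rw [Wser, coeff_four _ 2 n (n+2) k, PowerSeries.coeff_one]
  by_cases h0 : k = 0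
  · subst h0
    rw [if_neg (by omega : ¬ 2 ≤ 0), if_neg (by omega : ¬ n ≤ 0),
      if_neg (by omega : ¬ n+2 ≤ 0), if_pos rfl]
    norm_num [w]
  rw [if_neg h0]
  rcases Nat.even_or_odd k with hk | hk
  · -- even case
    have hk2 : k % 2 = 0 := Nat.even_iff.mp hk
    by_cases hA : k < n
    · -- 2 ≤ k < n
      have h2k : 2 ≤ k := by omega
      obtain ⟨l, hl⟩ : ∃ l, k = 2*l+2 := ⟨(k-2)/2, by omega⟩
      have e1 : k / 2 = l + 1 := by omega
      have e2 : (k-2)/2 = l := by omega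
      have d1 : k / n = 0 := Nat.div_eq_of_lt hA
      have d2 : (k-2)/n = 0 := Nat.div_eq_of_lt (by omega)
      rw [if_pos h2k, if_neg (by omega : ¬ n ≤ k), if_neg (by omega : ¬ n + 2 ≤ k)]
      rw [w, w, if_pos hk, if_pos (by simp only [Nat.even_iff]; omega), e1, e2, d1, d2]
      push_cast
      ring
    by_cases hB : k = n
    · subst hB
      -- now n is replaced by k, hn : k = 4*u+2
      have e1 : k / 2 = 2*u+1 := by omega
      have e2 : (k-2)/2 = 2*u := by omega
      have d1 : k / k = 1 := Nat.div_self hnpos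
      have d2 : (k-2)/k = 0 := Nat.div_eq_of_lt (by omega)
      rw [if_pos (by omega : 2 ≤ k), if_pos (le_refl k), if_neg (by omega : ¬ k+2 ≤ k),
        Nat.sub_self]
      rw [w, w, w, if_pos hk, if_pos (by simp only [Nat.even_iff]; omega),
        if_pos (by decide), e1, e2, d1, d2]
      push_cast
      simp only [pow_add, pow_mul, pow_succ, pow_zero]
      norm_num
    by_cases hC : k = n + 2
    · subst hC
      have e1 : (n+2) / 2 = 2*u+2 := by omega
      have e2 : n/2 = 2*u+1 := by omega
      have e3 : (2:ℕ)/2 = 1 := by norm_num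
      have d1 : (n+2) / n = 1 := hdiv _ n 1 2 hnpos (by omega) (by omega)
      have d2 : n/n = 1 := Nat.div_self hnpos
      have d3 : (2:ℕ)/n = 0 := Nat.div_eq_of_lt (by omega)
      rw [if_pos (by omega : 2 ≤ n+2), if_pos (by omega : n ≤ n+2), if_pos (le_refl (n+2)),
        Nat.sub_self, show n+2-2 = n by omega, show n+2-n = 2 by omega]
      rw [w, w, w, w, if_pos (by simp only [Nat.even_iff]; omega : Even (n+2)),
        if_pos (by simp only [Nat.even_iff]; omega : Even n), if_pos (by decide),
        if_pos (by decide), e1, e2, e3, d1, d2, d3]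
      push_cast
      simp only [pow_add, pow_mul, pow_succ, pow_zero]
      norm_num
    · -- k ≥ n + 4
      have hk4 : n + 4 ≤ k := by omega
      set A := k / n with hAdef
      set B := (k-2) / n with hBdef
      have hA1 : 1 ≤ A := (Nat.one_le_div_iff hnpos).2 (by omega)
      have hB1 : 1 ≤ B := (Nat.one_le_div_iff hnpos).2 (by omega)
      have d1 : (k - n)/n = A - 1 := nat_sub_div k n hnpos (by omega)
      have d2 : (k - (n+2))/n = B - 1 := by
        rw [show k - (n+2) = (k-2) - n by omega]
        exact nat_sub_div (k-2) n hnpos (by omega)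
      obtain ⟨p, hp⟩ : ∃ p, k = 2*p + 4*u + 6 := ⟨(k - (4*u+6))/2, by omega⟩
      have e1 : k/2 = 2*u + 3 + p := by omega
      have e2 : (k-2)/2 = 2*u+2+p := by omega
      have e3 : (k-n)/2 = p + 2 := by omega
      have e4 : (k-(n+2))/2 = p+1 := by omega
      rw [if_pos (by omega : 2 ≤ k), if_pos (by omega : n ≤ k), if_pos (by omega : n+2 ≤ k)]
      rw [w, w, w, w, if_pos hk, if_pos (by simp only [Nat.even_iff]; omega),
        if_pos (by simp only [Nat.even_iff]; omega),
        if_pos (by simp only [Nat.even_iff]; omega),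
        e1, e2, e3, e4, d1, d2, Nat.sub_add_cancel hA1, Nat.sub_add_cancel hB1]
      push_cast
      simp only [pow_add, pow_mul, pow_succ, pow_zero]
      norm_num
      ring
  · -- odd case
    have hk2 : k % 2 = 1 := Nat.odd_iff.mp hk
    have t1 : w n k = 0 := if_neg (by simp only [Nat.even_iff]; omega)
    have t2 : (if 2 ≤ k then w n (k-2) else 0) = 0 := by
      split_ifs with h
      · exact if_neg (by simp only [Nat.even_iff]; omega)
      · rfl
    have t3 : (if n ≤ k then w n (k-n) else 0) = 0 := by
      split_ifs with h
      · exact if_neg (by simp only [Nat.even_iff]; omega)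
      · rfl
    have t4 : (if n+2 ≤ k then w n (k-(n+2)) else 0) = 0 := by
      split_ifs with h
      · exact if_neg (by simp only [Nat.even_iff]; omega)
      · rfl
    rw [t1, t2, t3, t4]
    norm_num

end



noncomputable section

def pi24 : ZMod 4 →+* ZMod 2 := ZMod.castHom (by norm_num : (2:ℕ) ∣ 4) (ZMod 2)

lemma lemV'W' (u n : ℕ) (hn : n = 4*u+2) (hu : 2 ≤ u) :
    ((1 : (ZMod 2)⟦X⟧) + PowerSeries.X^4 + PowerSeries.X^(2*n) + PowerSeries.X^(2*n+4))
      * W'ser n = 1 := by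
  have hnpos : 0 < 2*n := by omega
  ext k
  rw [W'ser, coeff_four _ 4 (2*n) (2*n+4) k, PowerSeries.coeff_one]
  by_cases h4 : 4 ∣ k
  · by_cases h0 : k = 0
    · subst h0
      rw [if_neg (by omega : ¬ 4 ≤ 0), if_neg (by omega : ¬ 2*n ≤ 0),
        if_neg (by omega : ¬ 2*n+4 ≤ 0), if_pos rfl]
      norm_num [w']
    rw [if_neg h0]
    by_cases hA : k < 2*n
    · have h4k : 4 ≤ k := by omega
      have d1 : k / (2*n) = 0 := Nat.div_eq_of_lt hA
      have d2 : (k-4)/(2*n) = 0 := Nat.div_eq_of_lt (by omega)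
      rw [if_pos h4k, if_neg (by omega : ¬ 2*n ≤ k), if_neg (by omega : ¬ 2*n+4 ≤ k)]
      rw [w', w', if_pos h4, if_pos (by omega), d1, d2]
      decide
    by_cases hB : k = 2*n
    · subst hB
      have d1 : (2*n) / (2*n) = 1 := Nat.div_self hnpos
      have d2 : (2*n-4)/(2*n) = 0 := Nat.div_eq_of_lt (by omega)
      rw [if_pos (by omega : 4 ≤ 2*n), if_pos (le_refl (2*n)),
        if_neg (by omega : ¬ 2*n+4 ≤ 2*n), Nat.sub_self]
      rw [w', w', w', if_pos h4, if_pos (by omega), if_pos (by omega), d1, d2, Nat.zero_div]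
      push_cast
      decide
    by_cases hC : k = 2*n + 4
    · subst hC
      have d1 : (2*n+4) / (2*n) = 1 := hdiv _ (2*n) 1 4 hnpos (by omega) (by omega)
      have d2 : (2*n)/(2*n) = 1 := Nat.div_self hnpos
      have d3 : (4:ℕ)/(2*n) = 0 := Nat.div_eq_of_lt (by omega)
      rw [if_pos (by omega : 4 ≤ 2*n+4), if_pos (by omega : 2*n ≤ 2*n+4),
        if_pos (le_refl (2*n+4)), Nat.sub_self, show 2*n+4-4 = 2*n by omega,
        show 2*n+4-2*n = 4 by omega]
      rw [w', w', w', w', if_pos h4, if_pos (by omega), if_pos (by omega), if_pos (by omega),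
        d1, d2, d3, Nat.zero_div]
      push_cast
      decide
    · have hk8 : 2*n + 8 ≤ k := by omega
      set A := k / (2*n) with hAdef
      set B := (k-4) / (2*n) with hBdef
      have hA1 : 1 ≤ A := (Nat.one_le_div_iff hnpos).2 (by omega)
      have hB1 : 1 ≤ B := (Nat.one_le_div_iff hnpos).2 (by omega)
      have d1 : (k - 2*n)/(2*n) = A - 1 := nat_sub_div k (2*n) hnpos (by omega)
      have d2 : (k - (2*n+4))/(2*n) = B - 1 := by
        rw [show k - (2*n+4) = (k-4) - 2*n by omega]
        exact nat_sub_div (k-4) (2*n) hnpos (by omega)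
      rw [if_pos (by omega : 4 ≤ k), if_pos (by omega : 2*n ≤ k),
        if_pos (by omega : 2*n+4 ≤ k)]
      rw [w', w', w', w', if_pos h4, if_pos (by omega), if_pos (by omega), if_pos (by omega),
        d1, d2, Nat.sub_add_cancel hA1, Nat.sub_add_cancel hB1]
      have h2 : ((1:ZMod 2)+1) = 0 := by decide
      push_cast
      linear_combination ((A:ZMod 2) + (B:ZMod 2) + 1) * h2
  · -- 4 does not divide k
    have t1 : w' n k = 0 := if_neg h4
    have t2 : (if 4 ≤ k then w' n (k-4) else 0) = 0 := by
      split_ifs with h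
      · exact if_neg (by omega)
      · rfl
    have t3 : (if 2*n ≤ k then w' n (k-2*n) else 0) = 0 := by
      split_ifs with h
      · exact if_neg (by omega)
      · rfl
    have t4 : (if 2*n+4 ≤ k then w' n (k-(2*n+4)) else 0) = 0 := by
      split_ifs with h
      · exact if_neg (by omega)
      · rfl
    rw [t1, t2, t3, t4, if_neg (by omega : ¬ k = 0)]
    norm_num

lemma lemSq (u n : ℕ) (hn : n = 4*u+2) (hu : 2 ≤ u) :
    (PowerSeries.map pi24 (Wser n))^2 = W'ser n := by
  have h1 : ((1 : (ZMod 2)⟦X⟧) + PowerSeries.X^2 + PowerSeries.X^n + PowerSeries.X^(n+2))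
      * PowerSeries.map pi24 (Wser n) = 1 := by
    have hV : PowerSeries.map pi24 ((1 : (ZMod 4)⟦X⟧) + PowerSeries.X^2 + PowerSeries.X^n
        + PowerSeries.X^(n+2)) = (1 : (ZMod 2)⟦X⟧) + PowerSeries.X^2 + PowerSeries.X^n
        + PowerSeries.X^(n+2) := by
      simp [map_add, map_pow, PowerSeries.map_X, map_one]
    rw [← hV, ← map_mul, lemVW u n hn hu, map_one]
  have h2' : ((1:(ZMod 2)⟦X⟧) + 1) = 0 := by
    rw [← map_one (PowerSeries.C (R := (ZMod 2))), ← map_add,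
      show ((1:ZMod 2)+1) = 0 by decide, map_zero]
  have h2 : ((1 : (ZMod 2)⟦X⟧) + PowerSeries.X^2 + PowerSeries.X^n + PowerSeries.X^(n+2))^2
      = 1 + PowerSeries.X^4 + PowerSeries.X^(2*n) + PowerSeries.X^(2*n+4) := by
    linear_combination ((PowerSeries.X : (ZMod 2)⟦X⟧)^2 + PowerSeries.X^n
      + 2*PowerSeries.X^(n+2) + PowerSeries.X^(n+4) + PowerSeries.X^(2*n+2)) * h2'
  have h3 : ((1 : (ZMod 2)⟦X⟧) + PowerSeries.X^4 + PowerSeries.X^(2*n)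
      + PowerSeries.X^(2*n+4)) * (PowerSeries.map pi24 (Wser n))^2 = 1 := by
    rw [← h2, ← mul_pow, h1, one_pow]
  have h4 := lemV'W' u n hn hu
  calc (PowerSeries.map pi24 (Wser n))^2
      = (PowerSeries.map pi24 (Wser n))^2 * (((1 : (ZMod 2)⟦X⟧) + PowerSeries.X^4
        + PowerSeries.X^(2*n) + PowerSeries.X^(2*n+4)) * W'ser n) := by rw [h4, mul_one]
    _ = (((1 : (ZMod 2)⟦X⟧) + PowerSeries.X^4 + PowerSeries.X^(2*n)
        + PowerSeries.X^(2*n+4)) * (PowerSeries.map pi24 (Wser n))^2) * W'ser n := by ring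
    _ = W'ser n := by rw [h3, one_mul]

end



lemma geom (a : ℂ) :
    ((1 : ℂ⟦X⟧) - PowerSeries.C (R := ℂ) a * PowerSeries.X) * PowerSeries.mk (fun k => a ^ k) = 1 := by
  ext k
  rw [sub_mul, one_mul, mul_assoc]
  cases k with
  | zero => simp
  | succ k =>
    simp [PowerSeries.coeff_C_mul, PowerSeries.coeff_succ_X_mul, pow_succ, mul_comm]

lemma derivative_finset_prod {ι : Type*} [DecidableEq ι] (s : Finset ι) (f : ι → Polynomial ℂ) :
    derivative (∏ i ∈ s, f i) = ∑ i ∈ s, (∏ j ∈ s.erase i, f j) * derivative (f i) := by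
  induction s using Finset.induction_on with
  | empty => simp
  | @insert a s ha ih =>
    rw [Finset.prod_insert ha, derivative_mul, ih, Finset.sum_insert ha, Finset.erase_insert ha,
      Finset.mul_sum]
    congr 1
    · rw [mul_comm]
    · exact Finset.sum_congr rfl (fun i hi => by
        rw [Finset.erase_insert_of_ne (by rintro rfl; exact ha hi),
          Finset.prod_insert (fun h => ha (Finset.mem_of_mem_erase h)), mul_assoc])

lemma coe_finset_sum {ι : Type*} (s : Finset ι) (f : ι → Polynomial ℂ) :
    ((∑ i ∈ s, f i : Polynomial ℂ) : ℂ⟦X⟧) = ∑ i ∈ s, ((f i : Polynomial ℂ) : ℂ⟦X⟧) := by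
  ext k
  rw [Polynomial.coeff_coe, Polynomial.finset_sum_coeff, map_sum]
  exact Finset.sum_congr rfl (fun i _ => (Polynomial.coeff_coe _ _).symm)

lemma coeff_mul_poly6 {R : Type*} [CommRing R] (f : ℕ → R) (a b c d e k : ℕ) :
    (PowerSeries.coeff (R := R) k) (PowerSeries.mk f * ((1:R⟦X⟧) + PowerSeries.X^a + PowerSeries.X^b
        + PowerSeries.X^c + PowerSeries.X^d + PowerSeries.X^e))
      = f k + (if a ≤ k then f (k-a) else 0) + (if b ≤ k then f (k-b) else 0)
        + (if c ≤ k then f (k-c) else 0) + (if d ≤ k then f (k-d) else 0)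
        + (if e ≤ k then f (k-e) else 0) := by
  rw [mul_add, mul_add, mul_add, mul_add, mul_add, mul_one]
  simp [PowerSeries.coeff_mul_X_pow', PowerSeries.coeff_mk]

lemma coeff_CXD (c : ℂ) (p : Polynomial ℂ) (k : ℕ) :
    (Polynomial.C c * p - Polynomial.X * derivative p).coeff k = (c - k) * p.coeff k := by
  cases k with
  | zero =>
    rw [Polynomial.coeff_sub, Polynomial.coeff_C_mul, Polynomial.mul_coeff_zero,
      Polynomial.coeff_X_zero, zero_mul, sub_zero]
    push_cast
    ring
  | succ k =>
    rw [Polynomial.coeff_sub, Polynomial.coeff_C_mul, Polynomial.coeff_X_mul,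
      Polynomial.coeff_derivative]
    push_cast
    ring

theorem keyRel (m n : ℕ) (hn2 : 2 ≤ n) (hnm : n + 2 ≤ m)
    (K : Polynomial ℤ)
    (hK : K = X ^ (m + 1) + X ^ (m - 1) + X ^ (m - n + 1) + X ^ (m - n - 1) + X + 1)
    (x : Fin (m + 1) → ℂ)
    (hx : K.map (Int.castRingHom ℂ) = ∏ i, (X - C (x i)))
    (S : ℕ → ℤ)
    (hS : ∀ k, (S k : ℂ) = ∑ i, x i ^ k) :
    ∀ k : ℕ, S k + (if 2 ≤ k then S (k-2) else 0) + (if n ≤ k then S (k-n) else 0)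
      + (if n+2 ≤ k then S (k-(n+2)) else 0) + (if m ≤ k then S (k-m) else 0)
      + (if m+1 ≤ k then S (k-(m+1)) else 0)
    = ((m:ℤ)+1-k) * ((if k = 0 then 1 else 0) + (if k = 2 then 1 else 0)
      + (if k = n then 1 else 0) + (if k = n+2 then 1 else 0) + (if k = m then 1 else 0)
      + (if k = m+1 then 1 else 0)) := by
  set Q : Polynomial ℂ := ∏ i, (1 - C (x i) * X) with hQ
  set Qe : Polynomial ℂ := 1 + X^2 + X^n + X^(n+2) + X^m + X^(m+1) with hQe
  -- Step 1 : Q = Qe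
  have step1 : Q = Qe := by
    have hroot : ∀ t : ℂ, t ≠ 0 → Polynomial.eval t Q = Polynomial.eval t Qe := by
      intro t ht
      have hQt : Polynomial.eval t Q = ∏ i, (1 - x i * t) := by
        rw [hQ, Polynomial.eval_prod]
        exact Finset.prod_congr rfl (fun i _ => by simp)
      have hfac : ∀ i : Fin (m+1), (1 - x i * t) = t * (t⁻¹ - x i) := by
        intro i
        rw [mul_sub, mul_inv_cancel₀ ht]
        ring
      have hKe : Polynomial.eval t⁻¹ (K.map (Int.castRingHom ℂ))
          = (t⁻¹)^(m+1) + (t⁻¹)^(m-1) + (t⁻¹)^(m-n+1) + (t⁻¹)^(m-n-1) + t⁻¹ + 1 := by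
        simp [hK, inv_pow]
      have hprod : ∏ i, (t⁻¹ - x i) = Polynomial.eval t⁻¹ (K.map (Int.castRingHom ℂ)) := by
        rw [hx, Polynomial.eval_prod]
        exact (Finset.prod_congr rfl (fun i _ => by simp)).symm
      have hpow : ∀ e : ℕ, e ≤ m + 1 → t^(m+1) * (t⁻¹)^e = t^(m+1-e) := by
        intro e he
        have h' : m+1-e+e = m+1 := by omega
        calc t^(m+1) * (t⁻¹)^e = t^(m+1-e+e) * (t⁻¹)^e := by rw [h']
          _ = t^(m+1-e) := by
              rw [pow_add, mul_assoc, ← mul_pow, mul_inv_cancel₀ ht, one_pow, mul_one]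
      calc Polynomial.eval t Q = ∏ i, (1 - x i * t) := hQt
        _ = ∏ i : Fin (m+1), (t * (t⁻¹ - x i)) := Finset.prod_congr rfl (fun i _ => hfac i)
        _ = t^(m+1) * ∏ i, (t⁻¹ - x i) := by
            rw [Finset.prod_mul_distrib, Finset.prod_const, Finset.card_univ, Fintype.card_fin]
        _ = t^(m+1) * ((t⁻¹)^(m+1) + (t⁻¹)^(m-1) + (t⁻¹)^(m-n+1) + (t⁻¹)^(m-n-1) + t⁻¹ + 1)
            := by rw [hprod, hKe]
        _ = Polynomial.eval t Qe := by
            rw [mul_add, mul_add, mul_add, mul_add, mul_add,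
              hpow (m+1) (le_refl _), hpow (m-1) (by omega), hpow (m-n+1) (by omega),
              hpow (m-n-1) (by omega), show (t⁻¹ : ℂ) = (t⁻¹)^1 by ring, hpow 1 (by omega),
              mul_one]
            rw [show m+1-(m+1) = 0 by omega, show m+1-(m-1) = 2 by omega,
              show m+1-(m-n+1) = n by omega, show m+1-(m-n-1) = n+2 by omega,
              show m+1-1 = m by omega]
            simp only [hQe, eval_add, eval_one, eval_pow, eval_X]
            ring
    have hsub : {t : ℂ | t ≠ 0} ⊆ {t | Polynomial.IsRoot (Q - Qe) t} := by
      intro t ht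
      simp only [Set.mem_setOf_eq, Polynomial.IsRoot, Polynomial.eval_sub]
      rw [hroot t ht]
      ring
    have hinf : ({t : ℂ | t ≠ 0}).Infinite := by
      have h2 := (Set.finite_singleton (0:ℂ)).infinite_compl
      rwa [Set.compl_singleton_eq] at h2
    exact sub_eq_zero.mp (Polynomial.eq_zero_of_infinite_isRoot (Q - Qe) (hinf.mono hsub))
  -- Step 2 : the derivative identity
  have step2 : Polynomial.C ((m:ℂ)+1) * Q - Polynomial.X * derivative Q
      = ∑ i : Fin (m+1), ∏ j ∈ univ.erase i, (1 - C (x j) * X) := by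
    have hd : derivative Q = ∑ i : Fin (m+1),
        (∏ j ∈ univ.erase i, (1 - C (x j) * X)) * (-(C (x i))) := by
      rw [hQ, derivative_finset_prod]
      exact Finset.sum_congr rfl (fun i _ => by simp)
    have hQi : ∀ i : Fin (m+1), (∏ j ∈ univ.erase i, (1 - C (x j) * X))
        = Q + (C (x i) * X) * ∏ j ∈ univ.erase i, (1 - C (x j) * X) := by
      intro i
      have h := Finset.mul_prod_erase univ (fun j => 1 - C (x j) * X) (Finset.mem_univ i)
      rw [hQ]
      linear_combination h
    have hCQ : Polynomial.C ((m:ℂ)+1) * Q = ∑ _i : Fin (m+1), Q := by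
      rw [Finset.sum_const, Finset.card_univ, Fintype.card_fin, nsmul_eq_mul,
        show ((m:ℂ)+1) = ((m+1:ℕ):ℂ) by push_cast; ring, Polynomial.C_eq_natCast]
    rw [Finset.sum_congr rfl (fun i _ => hQi i), Finset.sum_add_distrib, ← hCQ, hd,
      Finset.mul_sum]
    rw [sub_eq_add_neg, ← Finset.sum_neg_distrib]
    congr 1
    exact Finset.sum_congr rfl (fun i _ => by ring)
  -- Step 3 : power series identity
  have step3 : PowerSeries.mk (fun k => ((S k : ℤ) : ℂ)) * (Qe : ℂ⟦X⟧)
      = ((Polynomial.C ((m:ℂ)+1) * Qe - Polynomial.X * derivative Qe : Polynomial ℂ) : ℂ⟦X⟧) := by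
    have hPmk : PowerSeries.mk (fun k => ((S k : ℤ) : ℂ))
        = ∑ i : Fin (m+1), PowerSeries.mk (fun k => x i ^ k) := by
      ext k
      rw [PowerSeries.coeff_mk, map_sum, hS k]
      exact Finset.sum_congr rfl (fun i _ => by rw [PowerSeries.coeff_mk])
    have hfac : ∀ i : Fin (m+1), (Q : ℂ⟦X⟧)
        = ((1 - C (x i) * X : Polynomial ℂ) : ℂ⟦X⟧)
          * ((∏ j ∈ univ.erase i, (1 - C (x j) * X) : Polynomial ℂ) : ℂ⟦X⟧) := by
      intro i
      rw [← Polynomial.coe_mul]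
      congr 1
      rw [hQ, ← Finset.mul_prod_erase univ (fun j => 1 - C (x j) * X) (Finset.mem_univ i)]
    have hterm : ∀ i : Fin (m+1),
        PowerSeries.mk (fun k => x i ^ k) * (Q : ℂ⟦X⟧)
          = ((∏ j ∈ univ.erase i, (1 - C (x j) * X) : Polynomial ℂ) : ℂ⟦X⟧) := by
      intro i
      have hgeo : ((1 - C (x i) * X : Polynomial ℂ) : ℂ⟦X⟧)
          * PowerSeries.mk (fun k => x i ^ k) = 1 := by
        have hc : ((1 - C (x i) * X : Polynomial ℂ) : ℂ⟦X⟧)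
            = (1 : ℂ⟦X⟧) - PowerSeries.C (R := ℂ) (x i) * PowerSeries.X := by
          rw [Polynomial.coe_sub, Polynomial.coe_one, Polynomial.coe_mul, Polynomial.coe_C,
            Polynomial.coe_X]
        rw [hc, geom]
      rw [hfac i, ← mul_assoc,
        mul_comm (PowerSeries.mk fun k => x i ^ k)
          ((1 - C (x i) * X : Polynomial ℂ) : ℂ⟦X⟧), hgeo, one_mul]
    rw [← step1, hPmk, Finset.sum_mul, step2, coe_finset_sum]
    exact Finset.sum_congr rfl (fun i _ => hterm i)
  -- Step 4 : extract coefficients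
  intro k
  have h4 := congrArg (PowerSeries.coeff (R := ℂ) k) step3
  have hQec : ((Qe : Polynomial ℂ) : ℂ⟦X⟧) = (1 : ℂ⟦X⟧) + PowerSeries.X^2
      + PowerSeries.X^n + PowerSeries.X^(n+2) + PowerSeries.X^m + PowerSeries.X^(m+1) := by
    rw [hQe, Polynomial.coe_add, Polynomial.coe_add, Polynomial.coe_add, Polynomial.coe_add,
      Polynomial.coe_add, Polynomial.coe_one, Polynomial.coe_pow, Polynomial.coe_pow,
      Polynomial.coe_pow, Polynomial.coe_pow, Polynomial.coe_pow, Polynomial.coe_X]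
  rw [hQec, coeff_mul_poly6, Polynomial.coeff_coe, coeff_CXD] at h4
  have hco : Qe.coeff k = ((if k = 0 then 1 else 0) + (if k = 2 then 1 else 0)
      + (if k = n then 1 else 0) + (if k = n+2 then (1:ℂ) else 0) + (if k = m then 1 else 0)
      + (if k = m+1 then 1 else 0)) := by
    rw [hQe]
    simp [Polynomial.coeff_one, Polynomial.coeff_X_pow]
  rw [hco] at h4
  apply Int.cast_injective (α := ℂ)
  push_cast [apply_ite (fun z : ℤ => (z : ℂ))]
  exact_mod_cast h4



lemma hdivb (A n q r P : ℕ) (hn : 0 < n) (hP : P = n * q) (h : A = P + r) (hr : r < n) :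
    A / n = q := hdiv A n q r hn (by rw [h, hP]) hr

lemma arith (m n u : ℕ) (hn : n = 4*u+2) (hu : 2 ≤ u) (hm4 : m % 4 = 3) (hnm : 2*n+3 ≤ m) :
    (((2*m-6)/n + 1) + ((2*m-4-n)/n + 1) + ((m-7)/(2*n) + 1) + ((m-n-5)/(2*n) + 1)
      + ((2*m-2*n-2)/n + 1) + ((2*m-3*n)/n + 1) + ((m-2*n-3)/(2*n) + 1)
      + (if 3*n+1 ≤ m then (m-3*n-1)/(2*n) + 1 else 0)) % 2
      = if 2*m % n ≤ 6 then 1 else 0 := by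
  have hn0 : 0 < n := by omega
  have h2n0 : 0 < 2*n := by omega
  set a := (m-3)/(2*n) with ha
  set s := (m-3) % (2*n) with hs
  have hsm : 2*n*a + s = m-3 := Nat.div_add_mod (m-3) (2*n)
  have hs2n : s < 2*n := Nat.mod_lt _ h2n0
  have ha1 : 1 ≤ a := (Nat.one_le_div_iff h2n0).2 (by omega)
  obtain ⟨α, hα⟩ : ∃ α, a = α + 1 := ⟨a-1, by omega⟩
  obtain ⟨NA, hNA⟩ : ∃ t, t = n*α := ⟨n*α, rfl⟩
  have hNA : NA = n*α := hNA
  have hm2 : m = 2*NA + 2*n + s + 3 := by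
    have : 2*n*a = 2*NA + 2*n := by rw [hNA, hα]; ring
    omega
  have hNAe : ∃ c, NA = 2*c := ⟨(2*u+1)*α, by rw [hNA, hn]; ring⟩
  obtain ⟨c, hc⟩ := hNAe
  have hs4 : s % 4 = 0 := by omega
  by_cases hs0 : s = 0
  · -- Branch A
    have f1 : (2*m-6)/n = 4*α+4 := hdivb _ n _ 0 (4*NA+4*n) hn0 (by rw [hNA]; ring) (by omega) (by omega)
    have f2 : (2*m-4-n)/n = 4*α+3 := hdivb _ n _ 2 (4*NA+3*n) hn0 (by rw [hNA]; ring) (by omega) (by omega)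
    have f3 : (2*m-2*n-2)/n = 4*α+2 := hdivb _ n _ 4 (4*NA+2*n) hn0 (by rw [hNA]; ring) (by omega) (by omega)
    have f4 : (2*m-3*n)/n = 4*α+1 := hdivb _ n _ 6 (4*NA+n) hn0 (by rw [hNA]; ring) (by omega) (by omega)
    have e1 : (m-7)/(2*n) = α := hdivb _ (2*n) _ (2*n-4) (2*NA) h2n0 (by rw [hNA]; ring) (by omega) (by omega)
    have e2 : (m-n-5)/(2*n) = α := hdivb _ (2*n) _ (n-2) (2*NA) h2n0 (by rw [hNA]; ring) (by omega) (by omega)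
    have e3 : (m-2*n-3)/(2*n) = α := hdivb _ (2*n) _ 0 (2*NA) h2n0 (by rw [hNA]; ring) (by omega) (by omega)
    have hq : (2*m)/n = 4*α+4 := hdivb _ n _ 6 (4*NA+4*n) hn0 (by rw [hNA]; ring) (by omega) (by omega)
    have hr : 2*m % n = 6 := by
      have hd := Nat.div_add_mod (2*m) n
      rw [hq] at hd
      have : n*(4*α+4) = 4*NA+4*n := by rw [hNA]; ring
      omega
    rw [f1, f2, f3, f4, e1, e2, e3, hr]
    by_cases hα1 : 1 ≤ α
    · have hle : n ≤ NA := by rw [hNA]; exact Nat.le_mul_of_pos_right n hα1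
      have hcond : 3*n+1 ≤ m := by omega
      have e4 : (m-3*n-1)/(2*n) = α - 1 := hdivb _ (2*n) _ (n+2) (2*NA-2*n) h2n0
        (by rw [hNA, Nat.mul_sub]; ring_nf) (by omega) (by omega)
      rw [if_pos hcond, e4, if_pos (show (6:ℕ) ≤ 6 by norm_num)]
      omega
    · have hNA0 : NA = 0 := by
        rw [hNA, show α = 0 by omega]
        simp
      rw [if_neg (show ¬ 3*n+1 ≤ m by omega), if_pos (show (6:ℕ) ≤ 6 by norm_num)]
      omega
  · -- s ≥ 4
    have hs4' : 4 ≤ s := by omega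
    by_cases hsB : s + 6 ≤ n
    · -- Branch B
      have e1 : (m-7)/(2*n) = α+1 := hdivb _ (2*n) _ (s-4) (2*NA+2*n) h2n0 (by rw [hNA]; ring) (by omega) (by omega)
      have e2 : (m-n-5)/(2*n) = α := hdivb _ (2*n) _ (n+s-2) (2*NA) h2n0 (by rw [hNA]; ring) (by omega) (by omega)
      have e3 : (m-2*n-3)/(2*n) = α := hdivb _ (2*n) _ s (2*NA) h2n0 (by rw [hNA]; ring) (by omega) (by omega)
      by_cases hB1 : 2*s+6 < n
      · -- B1
        have f1 : (2*m-6)/n = 4*α+4 := hdivb _ n _ (2*s) (4*NA+4*n) hn0 (by rw [hNA]; ring) (by omega) (by omega)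
        have f2 : (2*m-4-n)/n = 4*α+3 := hdivb _ n _ (2*s+2) (4*NA+3*n) hn0 (by rw [hNA]; ring) (by omega) (by omega)
        have f3 : (2*m-2*n-2)/n = 4*α+2 := hdivb _ n _ (2*s+4) (4*NA+2*n) hn0 (by rw [hNA]; ring) (by omega) (by omega)
        have f4 : (2*m-3*n)/n = 4*α+1 := hdivb _ n _ (2*s+6) (4*NA+n) hn0 (by rw [hNA]; ring) (by omega) (by omega)
        have hq : (2*m)/n = 4*α+4 := hdivb _ n _ (2*s+6) (4*NA+4*n) hn0 (by rw [hNA]; ring) (by omega) (by omega)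
        have hr : 2*m % n = 2*s+6 := by
          have hd := Nat.div_add_mod (2*m) n
          rw [hq] at hd
          have : n*(4*α+4) = 4*NA+4*n := by rw [hNA]; ring
          omega
        rw [f1, f2, f3, f4, e1, e2, e3, hr]
        by_cases hα1 : 1 ≤ α
        · have hle : n ≤ NA := by rw [hNA]; exact Nat.le_mul_of_pos_right n hα1
          have hcond : 3*n+1 ≤ m := by omega
          have e4 : (m-3*n-1)/(2*n) = α - 1 := hdivb _ (2*n) _ (n+s+2) (2*NA-2*n) h2n0
            (by rw [hNA, Nat.mul_sub]; ring_nf) (by omega) (by omega)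
          rw [if_pos hcond, e4, if_neg (show ¬ 2*s+6 ≤ 6 by omega)]
          omega
        · have hNA0 : NA = 0 := by rw [hNA, show α = 0 by omega]; simp
          rw [if_neg (show ¬ 3*n+1 ≤ m by omega), if_neg (show ¬ 2*s+6 ≤ 6 by omega)]
          omega
      · -- B2 : n ≤ 2*s+6
        have hle2 : n ≤ 2*s+6 := by omega
        have hEnd : ∀ hcnd : (if 3*n+1 ≤ m then (m-3*n-1)/(2*n) + 1 else 0)
            = (if 1 ≤ α then α else 0), True := fun _ => trivial
        have he4v : (if 3*n+1 ≤ m then (m-3*n-1)/(2*n) + 1 else 0)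
            = (if 1 ≤ α then α else 0) := by
          by_cases hα1 : 1 ≤ α
          · have hle : n ≤ NA := by rw [hNA]; exact Nat.le_mul_of_pos_right n hα1
            have hcond : 3*n+1 ≤ m := by omega
            have e4 : (m-3*n-1)/(2*n) = α - 1 := hdivb _ (2*n) _ (n+s+2) (2*NA-2*n) h2n0
              (by rw [hNA, Nat.mul_sub]; ring_nf) (by omega) (by omega)
            rw [if_pos hcond, e4, if_pos hα1]
            omega
          · have hNA0 : NA = 0 := by rw [hNA, show α = 0 by omega]; simp
            rw [if_neg (show ¬ 3*n+1 ≤ m by omega), if_neg hα1]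
        by_cases hBa : 2*s+6 = n
        · have f1 : (2*m-6)/n = 4*α+4 := hdivb _ n _ (n-6) (4*NA+4*n) hn0 (by rw [hNA]; ring) (by omega) (by omega)
          have f2 : (2*m-4-n)/n = 4*α+3 := hdivb _ n _ (n-4) (4*NA+3*n) hn0 (by rw [hNA]; ring) (by omega) (by omega)
          have f3 : (2*m-2*n-2)/n = 4*α+2 := hdivb _ n _ (n-2) (4*NA+2*n) hn0 (by rw [hNA]; ring) (by omega) (by omega)
          have f4 : (2*m-3*n)/n = 4*α+2 := hdivb _ n _ 0 (4*NA+2*n) hn0 (by rw [hNA]; ring) (by omega) (by omega)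
          have hq : (2*m)/n = 4*α+5 := hdivb _ n _ 0 (4*NA+5*n) hn0 (by rw [hNA]; ring) (by omega) (by omega)
          have hr : 2*m % n = 0 := by
            have hd := Nat.div_add_mod (2*m) n
            rw [hq] at hd
            have : n*(4*α+5) = 4*NA+5*n := by rw [hNA]; ring
            omega
          rw [f1, f2, f3, f4, e1, e2, e3, hr, he4v, if_pos (show (0:ℕ) ≤ 6 by norm_num)]
          by_cases hα1 : 1 ≤ α
          · rw [if_pos hα1]; omega
          · rw [if_neg hα1]; omega
        by_cases hBb : 2*s+6 = n+4
        · have f1 : (2*m-6)/n = 4*α+4 := hdivb _ n _ (n-2) (4*NA+4*n) hn0 (by rw [hNA]; ring) (by omega) (by omega)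
          have f2 : (2*m-4-n)/n = 4*α+4 := hdivb _ n _ 0 (4*NA+4*n) hn0 (by rw [hNA]; ring) (by omega) (by omega)
          have f3 : (2*m-2*n-2)/n = 4*α+3 := hdivb _ n _ 2 (4*NA+3*n) hn0 (by rw [hNA]; ring) (by omega) (by omega)
          have f4 : (2*m-3*n)/n = 4*α+2 := hdivb _ n _ 4 (4*NA+2*n) hn0 (by rw [hNA]; ring) (by omega) (by omega)
          have hq : (2*m)/n = 4*α+5 := hdivb _ n _ 4 (4*NA+5*n) hn0 (by rw [hNA]; ring) (by omega) (by omega)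
          have hr : 2*m % n = 4 := by
            have hd := Nat.div_add_mod (2*m) n
            rw [hq] at hd
            have : n*(4*α+5) = 4*NA+5*n := by rw [hNA]; ring
            omega
          rw [f1, f2, f3, f4, e1, e2, e3, hr, he4v, if_pos (show (4:ℕ) ≤ 6 by norm_num)]
          by_cases hα1 : 1 ≤ α
          · rw [if_pos hα1]; omega
          · rw [if_neg hα1]; omega
        · -- B2c : 2*s+6 ≥ n+8
          have hr8 : n + 8 ≤ 2*s+6 := by omega
          have f1 : (2*m-6)/n = 4*α+5 := hdivb _ n _ (2*s-n) (4*NA+5*n) hn0 (by rw [hNA]; ring) (by omega) (by omega)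
          have f2 : (2*m-4-n)/n = 4*α+4 := hdivb _ n _ (2*s+2-n) (4*NA+4*n) hn0 (by rw [hNA]; ring) (by omega) (by omega)
          have f3 : (2*m-2*n-2)/n = 4*α+3 := hdivb _ n _ (2*s+4-n) (4*NA+3*n) hn0 (by rw [hNA]; ring) (by omega) (by omega)
          have f4 : (2*m-3*n)/n = 4*α+2 := hdivb _ n _ (2*s+6-n) (4*NA+2*n) hn0 (by rw [hNA]; ring) (by omega) (by omega)
          have hq : (2*m)/n = 4*α+5 := hdivb _ n _ (2*s+6-n) (4*NA+5*n) hn0 (by rw [hNA]; ring) (by omega) (by omega)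
          have hr : 2*m % n = 2*s+6-n := by
            have hd := Nat.div_add_mod (2*m) n
            rw [hq] at hd
            have : n*(4*α+5) = 4*NA+5*n := by rw [hNA]; ring
            omega
          rw [f1, f2, f3, f4, e1, e2, e3, hr, he4v, if_neg (show ¬ 2*s+6-n ≤ 6 by omega)]
          by_cases hα1 : 1 ≤ α
          · rw [if_pos hα1]; omega
          · rw [if_neg hα1]; omega
    by_cases hsC : s = n - 2
    · -- Branch C
      have e1 : (m-7)/(2*n) = α+1 := hdivb _ (2*n) _ (n-6) (2*NA+2*n) h2n0 (by rw [hNA]; ring) (by omega) (by omega)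
      have e2 : (m-n-5)/(2*n) = α := hdivb _ (2*n) _ (2*n-4) (2*NA) h2n0 (by rw [hNA]; ring) (by omega) (by omega)
      have e3 : (m-2*n-3)/(2*n) = α := hdivb _ (2*n) _ (n-2) (2*NA) h2n0 (by rw [hNA]; ring) (by omega) (by omega)
      have hcond : 3*n+1 ≤ m := by omega
      have e4 : (m-3*n-1)/(2*n) = α := hdivb _ (2*n) _ 0 (2*NA) h2n0 (by rw [hNA]; ring) (by omega) (by omega)
      have f1 : (2*m-6)/n = 4*α+5 := hdivb _ n _ (n-4) (4*NA+5*n) hn0 (by rw [hNA]; ring) (by omega) (by omega)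
      have f2 : (2*m-4-n)/n = 4*α+4 := hdivb _ n _ (n-2) (4*NA+4*n) hn0 (by rw [hNA]; ring) (by omega) (by omega)
      have f3 : (2*m-2*n-2)/n = 4*α+4 := hdivb _ n _ 0 (4*NA+4*n) hn0 (by rw [hNA]; ring) (by omega) (by omega)
      have f4 : (2*m-3*n)/n = 4*α+3 := hdivb _ n _ 2 (4*NA+3*n) hn0 (by rw [hNA]; ring) (by omega) (by omega)
      have hq : (2*m)/n = 4*α+6 := hdivb _ n _ 2 (4*NA+6*n) hn0 (by rw [hNA]; ring) (by omega) (by omega)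
      have hr : 2*m % n = 2 := by
        have hd := Nat.div_add_mod (2*m) n
        rw [hq] at hd
        have : n*(4*α+6) = 4*NA+6*n := by rw [hNA]; ring
        omega
      rw [f1, f2, f3, f4, e1, e2, e3, hr, if_pos hcond, e4, if_pos (show (2:ℕ) ≤ 6 by norm_num)]
      omega
    · -- Branch D : s ≥ n+2
      have hsD : n + 2 ≤ s := by omega
      have e1 : (m-7)/(2*n) = α+1 := hdivb _ (2*n) _ (s-4) (2*NA+2*n) h2n0 (by rw [hNA]; ring) (by omega) (by omega)
      have e2 : (m-n-5)/(2*n) = α+1 := hdivb _ (2*n) _ (s-n-2) (2*NA+2*n) h2n0 (by rw [hNA]; ring) (by omega) (by omega)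
      have e3 : (m-2*n-3)/(2*n) = α := hdivb _ (2*n) _ s (2*NA) h2n0 (by rw [hNA]; ring) (by omega) (by omega)
      have hcond : 3*n+1 ≤ m := by omega
      have e4 : (m-3*n-1)/(2*n) = α := hdivb _ (2*n) _ (s+2-n) (2*NA) h2n0 (by rw [hNA]; ring) (by omega) (by omega)
      by_cases hD1 : 2*s+6 < 3*n
      · have f1 : (2*m-6)/n = 4*α+6 := hdivb _ n _ (2*s-2*n) (4*NA+6*n) hn0 (by rw [hNA]; ring) (by omega) (by omega)
        have f2 : (2*m-4-n)/n = 4*α+5 := hdivb _ n _ (2*s+2-2*n) (4*NA+5*n) hn0 (by rw [hNA]; ring) (by omega) (by omega)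
        have f3 : (2*m-2*n-2)/n = 4*α+4 := hdivb _ n _ (2*s+4-2*n) (4*NA+4*n) hn0 (by rw [hNA]; ring) (by omega) (by omega)
        have f4 : (2*m-3*n)/n = 4*α+3 := hdivb _ n _ (2*s+6-2*n) (4*NA+3*n) hn0 (by rw [hNA]; ring) (by omega) (by omega)
        have hq : (2*m)/n = 4*α+6 := hdivb _ n _ (2*s+6-2*n) (4*NA+6*n) hn0 (by rw [hNA]; ring) (by omega) (by omega)
        have hr : 2*m % n = 2*s+6-2*n := by
          have hd := Nat.div_add_mod (2*m) n
          rw [hq] at hd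
          have : n*(4*α+6) = 4*NA+6*n := by rw [hNA]; ring
          omega
        rw [f1, f2, f3, f4, e1, e2, e3, hr, if_pos hcond, e4,
          if_neg (show ¬ 2*s+6-2*n ≤ 6 by omega)]
        omega
      · -- D2 : 2*s+6 ≥ 3*n
        have hD2 : 3*n ≤ 2*s+6 := by omega
        have f4 : (2*m-3*n)/n = 4*α+4 := hdivb _ n _ (2*s+6-3*n) (4*NA+4*n) hn0 (by rw [hNA]; ring) (by omega) (by omega)
        have hq : (2*m)/n = 4*α+7 := hdivb _ n _ (2*s+6-3*n) (4*NA+7*n) hn0 (by rw [hNA]; ring) (by omega) (by omega)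
        have hr : 2*m % n = 2*s+6-3*n := by
          have hd := Nat.div_add_mod (2*m) n
          rw [hq] at hd
          have : n*(4*α+7) = 4*NA+7*n := by rw [hNA]; ring
          omega
        by_cases hDa : 2*s+6 = 3*n
        · have f1 : (2*m-6)/n = 4*α+6 := hdivb _ n _ (n-6) (4*NA+6*n) hn0 (by rw [hNA]; ring) (by omega) (by omega)
          have f2 : (2*m-4-n)/n = 4*α+5 := hdivb _ n _ (n-4) (4*NA+5*n) hn0 (by rw [hNA]; ring) (by omega) (by omega)
          have f3 : (2*m-2*n-2)/n = 4*α+4 := hdivb _ n _ (n-2) (4*NA+4*n) hn0 (by rw [hNA]; ring) (by omega) (by omega)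
          rw [f1, f2, f3, f4, e1, e2, e3, hr, if_pos hcond, e4,
            if_pos (show 2*s+6-3*n ≤ 6 by omega)]
          omega
        by_cases hDb : 2*s+6 = 3*n+4
        · have f1 : (2*m-6)/n = 4*α+6 := hdivb _ n _ (n-2) (4*NA+6*n) hn0 (by rw [hNA]; ring) (by omega) (by omega)
          have f2 : (2*m-4-n)/n = 4*α+6 := hdivb _ n _ 0 (4*NA+6*n) hn0 (by rw [hNA]; ring) (by omega) (by omega)
          have f3 : (2*m-2*n-2)/n = 4*α+5 := hdivb _ n _ 2 (4*NA+5*n) hn0 (by rw [hNA]; ring) (by omega) (by omega)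
          rw [f1, f2, f3, f4, e1, e2, e3, hr, if_pos hcond, e4,
            if_pos (show 2*s+6-3*n ≤ 6 by omega)]
          omega
        · have hr8 : 3*n+8 ≤ 2*s+6 := by omega
          have f1 : (2*m-6)/n = 4*α+7 := hdivb _ n _ (2*s-3*n) (4*NA+7*n) hn0 (by rw [hNA]; ring) (by omega) (by omega)
          have f2 : (2*m-4-n)/n = 4*α+6 := hdivb _ n _ (2*s+2-3*n) (4*NA+6*n) hn0 (by rw [hNA]; ring) (by omega) (by omega)
          have f3 : (2*m-2*n-2)/n = 4*α+5 := hdivb _ n _ (2*s+4-3*n) (4*NA+5*n) hn0 (by rw [hNA]; ring) (by omega) (by omega)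
          rw [f1, f2, f3, f4, e1, e2, e3, hr, if_pos hcond, e4,
            if_neg (show ¬ 2*s+6-3*n ≤ 6 by omega)]
          omega



def bit2 (x : ZMod 2) : ZMod 4 := if x = 1 then 2 else 0

lemma two_mul_z4 : ∀ y : ZMod 4, 2 * y = bit2 (pi24 y) := by
  intro y; fin_cases y <;> rfl

lemma bit2_add : ∀ a b : ZMod 2, bit2 a + bit2 b = bit2 (a + b) := by decide


theorem main4 (m n u M : ℕ) (hm : m = 4*M+3) (hn : n = 4*u+2) (hu : 2 ≤ u) (hnm : 2*n+3 ≤ m)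
    (S : ℕ → ℤ)
    (hrel : ∀ k : ℕ, S k + (if 2 ≤ k then S (k-2) else 0) + (if n ≤ k then S (k-n) else 0)
      + (if n+2 ≤ k then S (k-(n+2)) else 0) + (if m ≤ k then S (k-m) else 0)
      + (if m+1 ≤ k then S (k-(m+1)) else 0)
    = ((m:ℤ)+1-k) * ((if k = 0 then 1 else 0) + (if k = 2 then 1 else 0)
      + (if k = n then 1 else 0) + (if k = n+2 then 1 else 0) + (if k = m then 1 else 0)
      + (if k = m+1 then 1 else 0))) :
    ((S (2*m-4) + S (2*m-2*n) : ℤ) : ZMod 4) = if 2*m % n ≤ 6 then 2 else 0 := by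
  have hm3 : ((m:ℕ) : ZMod 4) = 3 := by
    rw [hm]; push_cast; rw [show ((4:ZMod 4)) = 0 by decide]; ring
  have hn2 : ((n:ℕ) : ZMod 4) = 2 := by
    rw [hn]; push_cast; rw [show ((4:ZMod 4)) = 0 by decide]; ring
  set S4 : ℕ → ZMod 4 := fun k => ((S k : ℤ) : ZMod 4) with hS4
  set P : PowerSeries (ZMod 4) := PowerSeries.mk S4 with hP
  -- the power series relation
  have hPR : P * ((1 : PowerSeries (ZMod 4)) + PowerSeries.X^2 + PowerSeries.X^n
      + PowerSeries.X^(n+2) + PowerSeries.X^m + PowerSeries.X^(m+1))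
      = PowerSeries.C (R := (ZMod 4)) 2 * PowerSeries.X^2 + PowerSeries.C (R := (ZMod 4)) 2 * PowerSeries.X^n
        + PowerSeries.X^m := by
    ext k
    rw [hP, coeff_mul_poly6]
    have h := congrArg (fun z : ℤ => (z : ZMod 4)) (hrel k)
    simp only [Int.cast_add, Int.cast_mul, Int.cast_sub, Int.cast_one, Int.cast_natCast,
      apply_ite (fun z : ℤ => (z : ZMod 4)), Int.cast_zero] at h
    rw [show (S4 k + (if 2 ≤ k then S4 (k-2) else 0) + (if n ≤ k then S4 (k-n) else 0)
        + (if n+2 ≤ k then S4 (k-(n+2)) else 0) + (if m ≤ k then S4 (k-m) else 0)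
        + (if m+1 ≤ k then S4 (k-(m+1)) else 0)) = (((m:ZMod 4))+1-(k:ℕ)) * ((if k = 0 then 1 else 0)
        + (if k = 2 then 1 else 0) + (if k = n then 1 else 0) + (if k = n+2 then 1 else 0)
        + (if k = m then 1 else 0) + (if k = m+1 then 1 else 0)) from h]
    rw [map_add, map_add, PowerSeries.coeff_C_mul, PowerSeries.coeff_C_mul,
      PowerSeries.coeff_X_pow, PowerSeries.coeff_X_pow, PowerSeries.coeff_X_pow]
    split_ifs <;> try (exfalso; omega)
    · have hk : k = 0 := by omega
      rw [hk, hm3]; push_cast; decide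
    · have hk : k = 2 := by omega
      rw [hk, hm3]; push_cast; decide
    · have hk : k = n := by omega
      rw [hk, hm3, hn2]; push_cast; decide
    · have hk : k = n+2 := by omega
      rw [hk, hm3]; push_cast [hn2]; decide
    · have hk : k = m := by omega
      rw [hk, hm3]; push_cast; decide
    · have hk : k = m+1 := by omega
      rw [hk]; push_cast [hm3]; decide
    · ring
  -- algebra: invert the series
  have hVW := lemVW u n hn hu
  have hC22 : PowerSeries.C (R := (ZMod 4)) 2 + PowerSeries.C (R := (ZMod 4)) 2 = 0 := by
    rw [← map_add, show (2+2 : ZMod 4) = 0 by decide, map_zero]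
  have h2 : P = PowerSeries.C (R := (ZMod 4)) 2 * (Wser n * PowerSeries.X^2)
      + PowerSeries.C (R := (ZMod 4)) 2 * (Wser n * PowerSeries.X^n)
      + Wser n * PowerSeries.X^m
      + PowerSeries.C (R := (ZMod 4)) 2 * ((Wser n * Wser n) * PowerSeries.X^(m+2))
      + PowerSeries.C (R := (ZMod 4)) 2 * ((Wser n * Wser n) * PowerSeries.X^(m+3))
      + PowerSeries.C (R := (ZMod 4)) 2 * ((Wser n * Wser n) * PowerSeries.X^(m+n))
      + PowerSeries.C (R := (ZMod 4)) 2 * ((Wser n * Wser n) * PowerSeries.X^(m+n+1))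
      + PowerSeries.X^(2*m) * ((1+PowerSeries.X)^2*((Wser n * Wser n)*P)
          - (1+PowerSeries.X)*(Wser n * Wser n)) := by
    have h1 : P = (PowerSeries.C (R := (ZMod 4)) 2 * PowerSeries.X^2
        + PowerSeries.C (R := (ZMod 4)) 2 * PowerSeries.X^n + PowerSeries.X^m) * Wser n
        - P * (PowerSeries.X^m + PowerSeries.X^(m+1)) * Wser n := by
      linear_combination (Wser n) * hPR - P * hVW
    linear_combination (1 - (PowerSeries.X^m + PowerSeries.X^(m+1)) * Wser n) * h1
      - ((Wser n * Wser n)*(PowerSeries.X^(m+2)+PowerSeries.X^(m+3)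
          +PowerSeries.X^(m+n)+PowerSeries.X^(m+n+1))) * hC22
  -- bits
  have hW2 : ∀ j, pi24 ((PowerSeries.coeff (R := (ZMod 4)) j) (Wser n * Wser n)) = w' n j := by
    intro j
    have h1 : pi24 ((PowerSeries.coeff (R := (ZMod 4)) j) (Wser n * Wser n))
        = (PowerSeries.coeff (R := (ZMod 2)) j) (PowerSeries.map pi24 (Wser n * Wser n)) := by
      rw [PowerSeries.coeff_map]
    rw [h1, map_mul, ← sq, lemSq u n hn hu, W'ser, PowerSeries.coeff_mk]
  have hbit2 : ∀ j, 2 * (PowerSeries.coeff (R := (ZMod 4)) j) (Wser n * Wser n) = bit2 (w' n j) := by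
    intro j; rw [two_mul_z4, hW2]
  have hpiw : ∀ j, Even j → 2 * w n j = bit2 (((j/n + 1 : ℕ) : ZMod 2)) := by
    intro j hj
    rw [two_mul_z4, w, if_pos hj, map_mul, map_pow, map_neg, map_one,
      show -(1 : ZMod 2) = 1 by decide, one_pow, map_natCast, one_mul]
  have hw'0 : ∀ j, ¬ (4 ∣ j) → bit2 (w' n j) = 0 := by
    intro j hj; rw [w', if_neg hj]; rfl
  have hw'v : ∀ j, (4 ∣ j) → bit2 (w' n j) = bit2 (((j/(2*n) + 1 : ℕ) : ZMod 2)) := by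
    intro j hj; rw [w', if_pos hj]
  -- coefficient extraction
  have key : ∀ k, m+3 ≤ k → k ≤ 2*m-4 →
      S4 k = 2 * w n (k-2) + 2 * w n (k-n) + w n (k-m)
        + 2 * ((PowerSeries.coeff (R := (ZMod 4)) (k-(m+2))) (Wser n * Wser n))
        + 2 * ((PowerSeries.coeff (R := (ZMod 4)) (k-(m+3))) (Wser n * Wser n))
        + 2 * (if m+n ≤ k then (PowerSeries.coeff (R := (ZMod 4)) (k-(m+n))) (Wser n * Wser n) else 0)
        + 2 * (if m+n+1 ≤ k then (PowerSeries.coeff (R := (ZMod 4)) (k-(m+n+1))) (Wser n * Wser n)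
            else 0) := by
    intro k hk1 hk2
    have hco := congrArg (PowerSeries.coeff (R := (ZMod 4)) k) h2
    rw [hP, PowerSeries.coeff_mk] at hco
    rw [map_add, map_add, map_add, map_add, map_add, map_add, map_add] at hco
    rw [PowerSeries.coeff_C_mul, PowerSeries.coeff_C_mul, PowerSeries.coeff_C_mul,
      PowerSeries.coeff_C_mul, PowerSeries.coeff_C_mul, PowerSeries.coeff_C_mul] at hco
    rw [PowerSeries.coeff_mul_X_pow', PowerSeries.coeff_mul_X_pow',
      PowerSeries.coeff_mul_X_pow', PowerSeries.coeff_mul_X_pow',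
      PowerSeries.coeff_mul_X_pow', PowerSeries.coeff_mul_X_pow',
      PowerSeries.coeff_mul_X_pow'] at hco
    rw [mul_comm (PowerSeries.X^(2*m) : PowerSeries (ZMod 4)) _,
      PowerSeries.coeff_mul_X_pow'] at hco
    rw [if_pos (by omega : 2 ≤ k), if_pos (by omega : n ≤ k), if_pos (by omega : m ≤ k),
      if_pos (by omega : m+2 ≤ k), if_pos (by omega : m+3 ≤ k),
      if_neg (by omega : ¬ 2*m ≤ k)] at hco
    rw [hco]
    simp only [Wser, PowerSeries.coeff_mk]
    ring
  -- evaluate at the two indices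
  have hev1 := key (2*m-4) (by omega) (by omega)
  have hev2 := key (2*m-2*n) (by omega) (by omega)
  rw [show 2*m-4-2 = 2*m-6 by omega, show 2*m-4-m = m-4 by omega,
    show 2*m-4-(m+2) = m-6 by omega, show 2*m-4-(m+3) = m-7 by omega,
    show 2*m-4-(m+n) = m-n-4 by omega, show 2*m-4-(m+n+1) = m-n-5 by omega,
    if_pos (by omega : m+n ≤ 2*m-4), if_pos (by omega : m+n+1 ≤ 2*m-4)] at hev1
  rw [show 2*m-2*n-2 = 2*m-2*n-2 from rfl, show 2*m-2*n-n = 2*m-3*n by omega,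
    show 2*m-2*n-m = m-2*n by omega, show 2*m-2*n-(m+2) = m-2*n-2 by omega,
    show 2*m-2*n-(m+3) = m-2*n-3 by omega, show 2*m-2*n-(m+n) = m-3*n by omega,
    show 2*m-2*n-(m+n+1) = m-3*n-1 by omega] at hev2
  rw [hpiw (2*m-6) (by simp only [Nat.even_iff]; omega),
    hpiw (2*m-4-n) (by simp only [Nat.even_iff]; omega),
    show w n (m-4) = 0 from if_neg (by simp only [Nat.even_iff]; omega),
    hbit2 (m-6), hbit2 (m-7), hbit2 (m-n-4), hbit2 (m-n-5),
    hw'0 (m-6) (by omega), hw'0 (m-n-4) (by omega),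
    hw'v (m-7) (by omega), hw'v (m-n-5) (by omega)] at hev1
  rw [hpiw (2*m-2*n-2) (by simp only [Nat.even_iff]; omega),
    hpiw (2*m-3*n) (by simp only [Nat.even_iff]; omega),
    show w n (m-2*n) = 0 from if_neg (by simp only [Nat.even_iff]; omega),
    hbit2 (m-2*n-2), hbit2 (m-2*n-3),
    hw'0 (m-2*n-2) (by omega), hw'v (m-2*n-3) (by omega)] at hev2
  have hite1 : (2 : ZMod 4) * (if m+n ≤ 2*m-2*n then
      (PowerSeries.coeff (R := (ZMod 4)) (m-3*n)) (Wser n * Wser n) else 0) = 0 := by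
    split_ifs with hc
    · rw [hbit2]
      exact hw'0 _ (by omega)
    · rw [mul_zero]
  have hite2 : (2 : ZMod 4) * (if m+n+1 ≤ 2*m-2*n then
      (PowerSeries.coeff (R := (ZMod 4)) (m-3*n-1)) (Wser n * Wser n) else 0)
      = bit2 (((if 3*n+1 ≤ m then (m-3*n-1)/(2*n) + 1 else 0 : ℕ) : ZMod 2)) := by
    by_cases hc : 3*n+1 ≤ m
    · rw [if_pos (by omega : m+n+1 ≤ 2*m-2*n), if_pos hc, hbit2]
      exact hw'v _ (by omega)
    · rw [if_neg (by omega : ¬ m+n+1 ≤ 2*m-2*n), if_neg hc, mul_zero]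
      rfl
  rw [hite1, hite2] at hev2
  -- assemble
  have hS1 : ((S (2*m-4) : ℤ) : ZMod 4) = S4 (2*m-4) := rfl
  have hS2 : ((S (2*m-2*n) : ℤ) : ZMod 4) = S4 (2*m-2*n) := rfl
  push_cast
  rw [hS1, hS2, hev1, hev2]
  rw [show (0 : ZMod 4) = bit2 0 from rfl]
  rw [bit2_add, bit2_add, bit2_add, bit2_add, bit2_add, bit2_add, bit2_add, bit2_add,
    bit2_add, bit2_add, bit2_add, bit2_add, bit2_add]
  have harg : ((((2*m-6)/n + 1 : ℕ) : ZMod 2) + (((2*m-4-n)/n + 1 : ℕ) : ZMod 2) + 0 + 0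
      + (((m-7)/(2*n) + 1 : ℕ) : ZMod 2) + 0 + (((m-n-5)/(2*n) + 1 : ℕ) : ZMod 2)
      + ((((2*m-2*n-2)/n + 1 : ℕ) : ZMod 2) + (((2*m-3*n)/n + 1 : ℕ) : ZMod 2) + 0 + 0
      + (((m-2*n-3)/(2*n) + 1 : ℕ) : ZMod 2) + 0
      + (((if 3*n+1 ≤ m then (m-3*n-1)/(2*n) + 1 else 0 : ℕ) : ZMod 2))))
      = (((((2*m-6)/n + 1) + ((2*m-4-n)/n + 1) + ((m-7)/(2*n) + 1) + ((m-n-5)/(2*n) + 1)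
      + ((2*m-2*n-2)/n + 1) + ((2*m-3*n)/n + 1) + ((m-2*n-3)/(2*n) + 1)
      + (if 3*n+1 ≤ m then (m-3*n-1)/(2*n) + 1 else 0) : ℕ)) : ZMod 2) := by
    push_cast [apply_ite (fun z : ℕ => (z : ZMod 2))]
    ring
  rw [harg]
  have ha := arith m n u hn hu (by omega) hnm
  set EE := (((2*m-6)/n + 1) + ((2*m-4-n)/n + 1) + ((m-7)/(2*n) + 1) + ((m-n-5)/(2*n) + 1)
      + ((2*m-2*n-2)/n + 1) + ((2*m-3*n)/n + 1) + ((m-2*n-3)/(2*n) + 1)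
      + (if 3*n+1 ≤ m then (m-3*n-1)/(2*n) + 1 else 0) : ℕ) with hEE
  by_cases hcnd : 2*m % n ≤ 6
  · rw [if_pos hcnd] at ha ⊢
    obtain ⟨t, ht⟩ : ∃ t, EE = 2*t+1 := ⟨EE/2, by omega⟩
    rw [ht]
    have h1 : ((2*t+1 : ℕ) : ZMod 2) = 1 := by
      push_cast
      rw [show ((2:ZMod 2)) = 0 by decide]
      ring
    rw [h1]
    rfl
  · rw [if_neg hcnd] at ha ⊢
    obtain ⟨t, ht⟩ : ∃ t, EE = 2*t := ⟨EE/2, by omega⟩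
    rw [ht]
    have h1 : ((2*t : ℕ) : ZMod 2) = 0 := by
      push_cast
      rw [show ((2:ZMod 2)) = 0 by decide]
      ring
    rw [h1]


end TI

open Polynomial

/-- CASE 3 (odd degree): for odd `m` with `m + 1 ≡ 0 (mod 4)`, `n ≡ 2 (mod 4)` with `n ≠ 6`
and `4 ≤ n ≤ ⌊m/2⌋ − 1`, with `K = x^{m+1} + x^{m−1} + x^{m−n+1} + x^{m−n−1} + x + 1 ∈ ℤ[x]`
and power sums `S_k` of its complex roots:
`S_{2m−4} + S_{2m−2n} ≡ 2 (mod 4)` if `(2m mod n) ≤ 6`, and `≡ 0 (mod 4)` if `(2m mod n) > 6`. -/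
theorem typeI_power_sums_case3
    (m n : ℕ) (hm : Odd m) (hm4 : (m + 1) % 4 = 0)
    (hn4 : n % 4 = 2) (hn6 : n ≠ 6) (hn : 4 ≤ n) (hnm : n ≤ m / 2 - 1)
    (K : Polynomial ℤ)
    (hK : K = X ^ (m + 1) + X ^ (m - 1) + X ^ (m - n + 1) + X ^ (m - n - 1) + X + 1)
    (x : Fin (m + 1) → ℂ)
    (hx : K.map (Int.castRingHom ℂ) = ∏ i, (X - C (x i)))
    (S : ℕ → ℤ)
    (hS : ∀ k, (S k : ℂ) = ∑ i, x i ^ k) :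
    (2 * m % n ≤ 6 → Int.ModEq 4 (S (2 * m - 4) + S (2 * m - 2 * n)) 2) ∧
    (6 < 2 * m % n → Int.ModEq 4 (S (2 * m - 4) + S (2 * m - 2 * n)) 0) := by
  have hodd : m % 2 = 1 := Nat.odd_iff.mp hm
  obtain ⟨M, hM⟩ : ∃ M, m = 4*M+3 := ⟨m/4, by omega⟩
  obtain ⟨u, hu⟩ : ∃ u, n = 4*u+2 := ⟨n/4, by omega⟩
  have hu2 : 2 ≤ u := by omega
  have hnm' : 2*n+3 ≤ m := by omega
  have hrel := TI.keyRel m n (by omega) (by omega) K hK x hx S hS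
  have hfin := TI.main4 m n u M hM hu hu2 hnm' S hrel
  constructor
  · intro hc
    rw [if_pos hc] at hfin
    have h2 : ((2 : ℤ) : ZMod 4) = 2 := by norm_num
    rw [← h2] at hfin
    have := (ZMod.intCast_eq_intCast_iff _ _ _).mp hfin
    exact_mod_cast this
  · intro hc
    rw [if_neg (by omega : ¬ 2*m % n ≤ 6)] at hfin
    have h2 : ((0 : ℤ) : ZMod 4) = 0 := by norm_num
    rw [← h2] at hfin
    have := (ZMod.intCast_eq_intCast_iff _ _ _).mp hfin
    exact_mod_cast this
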